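/- arXiv:1605.00511 — 3 statements merged into one kernel-verified Lean document; each statement's English description precedes it below -/
import Mathlib

section
/- Let $k^\circ$ be a valuation ring with maximal ideal $\mathfrak{m}$ and fix a nonzero $\varpi \in \mathfrak{m}$. Let $A$ be a $k^\circ$-algebra satisfying properties (a), (b), (c) as above. Then for every $f \in A \setminus \mathfrak{m}A$, the quotient ring $A/(f)$ is $\varpi$-torsion free (equivalently, flat over $k^\circ$). -/
/-- Proposition A.1(ii) of the paper.
`R` is a valuation ring (the valuation ring `k°`), `𝔪` its maximal ideal,
`ϖ ∈ 𝔪` nonzero, and `A` an `R`-algebra satisfying properties (a), (b), (c).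
Then for every `f ∈ A \ 𝔪A` the quotient `A/(f)` is `ϖ`-torsion free:
for all `a ∈ A`, if `ϖ a ∈ (f)` then `a ∈ (f)`. -/
theorem stmt1 {R A : Type*} [CommRing R] [IsDomain R] [ValuationRing R]
    [CommRing A] [Algebra R A]
    (ϖ : R) (hϖ0 : ϖ ≠ 0) (hϖm : ϖ ∈ IsLocalRing.maximalIdeal R)
    (ha : Function.Injective fun a : A => algebraMap R A ϖ * a)
    (hb : IsDomain (A ⧸ (IsLocalRing.maximalIdeal R).map (algebraMap R A)))
    (hc : ∀ f : A, f ≠ 0 → ∃ (c : R) (f' : A), f = algebraMap R A c * f' ∧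
      f' ∉ (IsLocalRing.maximalIdeal R).map (algebraMap R A)) :
    ∀ f : A, f ∉ (IsLocalRing.maximalIdeal R).map (algebraMap R A) →
      ∀ a : A, algebraMap R A ϖ * a ∈ Ideal.span {f} → a ∈ Ideal.span {f} := by
  haveI := hb
  set 𝔪A := (IsLocalRing.maximalIdeal R).map (algebraMap R A) with h𝔪A
  intro f hf a hmem
  by_cases ha0 : a = 0
  · simp [ha0]
  -- ϖ a ≠ 0
  have hϖa0 : algebraMap R A ϖ * a ≠ 0 := by
    intro h
    apply ha0
    have := ha (a₁ := a) (a₂ := 0) (by simpa using h)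
    simpa using this
  obtain ⟨g, hg⟩ := (Ideal.mem_span_singleton).mp hmem
  have hg0 : g ≠ 0 := by
    rintro rfl
    simp at hg
    exact hϖa0 hg
  obtain ⟨c, g', hgcf, hg'⟩ := hc g hg0
  have hc0 : c ≠ 0 := by
    rintro rfl
    simp at hgcf
    exact hg0 hgcf
  have key : algebraMap R A ϖ * a = algebraMap R A c * (g' * f) := by
    rw [hg, hgcf]; ring
  obtain ⟨d, hd | hd⟩ := ValuationRing.cond ϖ c
  · -- ϖ * d = c
    have : algebraMap R A ϖ * a = algebraMap R A ϖ * (algebraMap R A d * (g' * f)) := by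
      rw [key, ← hd, map_mul]; ring
    have h2 := ha this
    rw [h2]
    exact Ideal.mem_span_singleton.mpr ⟨algebraMap R A d * g', by ring⟩
  · -- c * d = ϖ
    have hcancel : algebraMap R A c * (algebraMap R A d * a - g' * f) = 0 := by
      have : algebraMap R A c * (algebraMap R A d * a) = algebraMap R A c * (g' * f) := by
        rw [← key, ← mul_assoc, ← map_mul, hd]
      rw [mul_sub, this, sub_self]
    have hϖz : algebraMap R A ϖ * (algebraMap R A d * a - g' * f) =
        algebraMap R A ϖ * 0 := by
      rw [← hd, map_mul, mul_assoc, mul_comm (algebraMap R A d), ← mul_assoc, hcancel]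
      ring
    have heq : algebraMap R A d * a - g' * f = 0 := ha hϖz
    have heq' : algebraMap R A d * a = g' * f := by linear_combination heq
    -- d is a unit
    have hdunit : IsUnit d := by
      by_contra hdu
      have hdm : d ∈ IsLocalRing.maximalIdeal R := hdu
      have hdA : algebraMap R A d ∈ 𝔪A := Ideal.mem_map_of_mem _ hdm
      have hfA : f ∉ 𝔪A := hf
      have h1 : Ideal.Quotient.mk 𝔪A (g' * f) = 0 := by
        rw [← heq', map_mul, Ideal.Quotient.eq_zero_iff_mem.mpr hdA, zero_mul]
      rw [map_mul] at h1
      rcases mul_eq_zero.mp h1 with h | h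
      · exact hg' (Ideal.Quotient.eq_zero_iff_mem.mp h)
      · exact hfA (Ideal.Quotient.eq_zero_iff_mem.mp h)
    have hu : IsUnit (algebraMap R A d) := hdunit.map _
    obtain ⟨u, hu⟩ := hu
    have : a = ↑u⁻¹ * (g' * f) := by
      rw [← heq', ← hu, ← mul_assoc, Units.inv_mul, one_mul]
    rw [this]
    exact Ideal.mem_span_singleton.mpr ⟨↑u⁻¹ * g', by ring⟩
end

section
/- Let $k^\circ$ be a valuation ring with maximal ideal $\mathfrak{m}$, $\varpi \in \mathfrak{m}$ nonzero, and let $A$ be a $k^\circ$-algebra satisfying properties (a), (b), (c). Fix an integer $q > 1$ and sequences $(f_m)_{m \ge 1}$, $(g_m)_{m \ge 1}$ in $A$ with $f_{m+1}^q = f_m$, $g_{m+1}^q = g_m$, and $f_1 - g_1 \in A \setminus \mathfrak{m}A$. Then the quotient $A/(f_m - g_m \mid m \ge 1)$ is $\varpi$-torsion free. -/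
/-- Corollary A.2 of the paper.
`R` is a valuation ring with maximal ideal `𝔪`, `ϖ ∈ 𝔪` nonzero, and `A` an
`R`-algebra satisfying properties (a), (b), (c).  Given `q > 1` and sequences
`(f m)`, `(g m)` (indexed by `m ≥ 1`, here by `ℕ` with `f (m+1) ^ q = f m`,
`g (m+1) ^ q = g m`) with `f 0 - g 0 ∉ 𝔪A` (the case `m = 1` of the paper),
the quotient `A/(f m - g m ∣ m)` is `ϖ`-torsion free. -/
theorem stmt2 {R A : Type*} [CommRing R] [IsDomain R] [ValuationRing R]
    [CommRing A] [Algebra R A]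
    (ϖ : R) (hϖ0 : ϖ ≠ 0) (hϖm : ϖ ∈ IsLocalRing.maximalIdeal R)
    (ha : Function.Injective fun a : A => algebraMap R A ϖ * a)
    (hb : IsDomain (A ⧸ (IsLocalRing.maximalIdeal R).map (algebraMap R A)))
    (hc : ∀ h : A, h ≠ 0 → ∃ (c : R) (h' : A), h = algebraMap R A c * h' ∧
      h' ∉ (IsLocalRing.maximalIdeal R).map (algebraMap R A))
    (q : ℕ) (hq : 1 < q) (f g : ℕ → A)
    (hf : ∀ m, f (m + 1) ^ q = f m) (hg : ∀ m, g (m + 1) ^ q = g m)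
    (h1 : f 0 - g 0 ∉ (IsLocalRing.maximalIdeal R).map (algebraMap R A)) :
    ∀ x : A ⧸ Ideal.span (Set.range fun m => f m - g m),
      algebraMap R (A ⧸ Ideal.span (Set.range fun m => f m - g m)) ϖ * x = 0 → x = 0 := by
  set J : Ideal A := (IsLocalRing.maximalIdeal R).map (algebraMap R A) with hJ
  set I : Ideal A := Ideal.span (Set.range fun m => f m - g m) with hI
  -- divisibility chain
  have hdvd : ∀ k m : ℕ, k ≤ m → (f m - g m) ∣ (f k - g k) := by
    intro k m h
    induction m, h using Nat.le_induction with
    | base => exact dvd_refl _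
    | succ n hn ih =>
      exact dvd_trans (by rw [← hf n, ← hg n]; exact sub_dvd_pow_sub_pow _ _ q) ih
  -- each f m - g m is not in J
  have hnm : ∀ m : ℕ, f m - g m ∉ J := by
    intro m hm
    obtain ⟨t, ht⟩ := hdvd 0 m (Nat.zero_le m)
    exact h1 (ht ▸ Ideal.mul_mem_right t J hm)
  -- every element of I is divisible by some f m - g m
  have hmem : ∀ z ∈ I, ∃ m : ℕ, (f m - g m) ∣ z := by
    intro z hz
    refine Submodule.span_induction ?_ ?_ ?_ ?_ hz
    · rintro _ ⟨m, rfl⟩; exact ⟨m, dvd_refl _⟩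
    · exact ⟨0, dvd_zero _⟩
    · rintro u v _ _ ⟨m1, hm1⟩ ⟨m2, hm2⟩
      refine ⟨max m1 m2, dvd_add ?_ ?_⟩
      · exact dvd_trans (hdvd m1 _ (le_max_left _ _)) hm1
      · exact dvd_trans (hdvd m2 _ (le_max_right _ _)) hm2
    · rintro r u _ ⟨m, hm⟩
      refine ⟨m, ?_⟩
      rw [smul_eq_mul]
      exact hm.mul_left r
  have hsub : ∀ m : ℕ, f m - g m ∈ I := by
    intro m
    exact Ideal.subset_span ⟨m, rfl⟩
  haveI := hb
  intro x hx
  obtain ⟨y, rfl⟩ := Ideal.Quotient.mk_surjective x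
  rw [← Ideal.Quotient.mk_algebraMap, ← map_mul, Ideal.Quotient.eq_zero_iff_mem] at hx
  rw [Ideal.Quotient.eq_zero_iff_mem]
  obtain ⟨m, a, hay⟩ : ∃ m a, algebraMap R A ϖ * y = (f m - g m) * a := by
    obtain ⟨m, t, ht⟩ := hmem _ hx; exact ⟨m, t, ht⟩
  by_cases ha0 : a = 0
  · -- then ϖ y = 0, so y = 0
    have : y = 0 := ha (by simpa [ha0] using hay : algebraMap R A ϖ * y = algebraMap R A ϖ * 0)
    rw [this]; exact I.zero_mem
  obtain ⟨c, a', hca, ha'⟩ := hc a ha0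
  have hc0 : c ≠ 0 := by
    rintro rfl; simp at hca; exact ha0 hca
  -- c-torsion-freeness will follow if c ∣ ϖ; main dichotomy
  have key : ϖ ∣ c := by
    obtain ⟨d, hd | hd⟩ := ValuationRing.cond ϖ c
    · exact ⟨d, hd.symm⟩
    · -- c * d = ϖ
      by_cases hdu : IsUnit d
      · obtain ⟨u, rfl⟩ := hdu
        exact ⟨(u⁻¹ : Rˣ), by rw [← hd]; rw [mul_assoc]; simp⟩
      · exfalso
        have hdm : (d : R) ∈ IsLocalRing.maximalIdeal R := hdu
        -- cancel c from c*(d*y) = c*(a'*(f m - g m))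
        have hcinj : ∀ z w : A, algebraMap R A c * z = algebraMap R A c * w → z = w := by
          intro z w hzw
          apply ha
          show algebraMap R A ϖ * z = algebraMap R A ϖ * w
          rw [← hd, map_mul, mul_comm (algebraMap R A c), mul_assoc, mul_assoc, hzw]
        have heq : algebraMap R A d * y = a' * (f m - g m) := by
          apply hcinj
          have hϖcd : algebraMap R A ϖ = algebraMap R A c * algebraMap R A d := by
            rw [← map_mul, hd]
          calc algebraMap R A c * (algebraMap R A d * y)
              = algebraMap R A ϖ * y := by rw [hϖcd, mul_assoc]
            _ = (f m - g m) * (algebraMap R A c * a') := by rw [hay, hca]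
            _ = algebraMap R A c * (a' * (f m - g m)) := by ring
        -- LHS is in J, so a' * (f m - g m) ∈ J, contradicting domain
        have hJmem : a' * (f m - g m) ∈ J := by
          rw [← heq]
          exact Ideal.mul_mem_right y J (Ideal.mem_map_of_mem _ hdm)
        have := Ideal.Quotient.eq_zero_iff_mem.mpr hJmem
        rw [map_mul] at this
        rcases mul_eq_zero.mp this with h' | h'
        · exact ha' (Ideal.Quotient.eq_zero_iff_mem.mp h')
        · exact hnm m (Ideal.Quotient.eq_zero_iff_mem.mp h')
  obtain ⟨e, rfl⟩ := key
  -- ϖ y = ϖ e a' (f m - g m); cancel ϖ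
  have : y = algebraMap R A e * a' * (f m - g m) := by
    apply ha
    simp only
    rw [hay, hca, map_mul]
    ring
  rw [this]
  exact Ideal.mul_mem_left I _ (hsub m)
end

section
/- Let $k^\circ$ be the valuation ring of a complete algebraically closed non-archimedean field $k$ with residue characteristic $p \neq 2$. Fix $\varpi' \in \mathfrak{m}$ nonzero with square $\varpi = \varpi'^2$, and fix compatible $p$-power roots $\varpi'^{1/p^m}$. Let $A \subseteq k^\circ \times k^\circ$ be the subring $A = \{(x,y) \in k^\circ \times k^\circ \mid x - y \in \mathfrak{m}\}$. Then: (1) $A$ is not topologically finitely generated over $k^\circ$ (i.e., not a quotient of any $k^\circ\langle T_1,\ldots,T_n\rangle$); (2) $A/\mathfrak{m}A \cong \kappa$ (the residue field), via the map induced by $k^\circ \to A$, $x \mapsto (x,x)$; (3) the integral closure of $A$ in $A[1/\varpi] = k \times k$ is $k^\circ \times k^\circ$. -/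
/-- Example 3.19(iii),(iv),(v) of the paper.
`K` is a complete algebraically closed non-archimedean field with rank-one
valuation `v`, valuation ring `k° = {x | v x ≤ 1}`, maximal ideal
`𝔪 = {x | v x < 1}`, residue field `κ = k°/𝔪`, of residue characteristic
`p ≠ 2`; `ϖ' ∈ 𝔪` is nonzero with compatible `p`-power roots
`r j = ϖ'^{1/p^j}` and `ϖ = ϖ'²`.  Let
`A = {(x,y) ∈ k° × k° | x - y ∈ 𝔪} ⊆ K × K`.  Then:
(1) `A` is not topologically finitely generated over `k°`: no finite subset
    `s ⊆ A` together with the diagonal copy of `k°` generates a `ϖ`-adically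
    dense subring of `A`;
(2) `A/𝔪A ≅ κ`: the diagonal map `k° → A` is surjective onto `A` modulo `𝔪A`
    and has kernel exactly `𝔪`;
(3) the integral closure of `A` in `A[1/ϖ] = K × K` is `k° × k°`: an element
    `z ∈ K × K` is integral over `A` iff `z ∈ k° × k°`. -/
theorem stmt18 {K : Type*} [Field K] [Valued K NNReal] [IsAlgClosed K]
    [CompleteSpace K]
    (p : ℕ) (hp : p.Prime) (hp2 : p ≠ 2) (hpres : Valued.v (p : K) < 1)
    (ϖ' : K) (hϖ'0 : ϖ' ≠ 0) (hϖ'1 : Valued.v ϖ' < 1)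
    (r : ℕ → K) (hr0 : r 0 = ϖ') (hrp : ∀ j, r (j + 1) ^ p = r j) :
    ∀ A : Subring (K × K),
      (A : Set (K × K)) = {z | Valued.v z.1 ≤ 1 ∧ Valued.v z.2 ≤ 1 ∧
        Valued.v (z.1 - z.2) < 1} →
    ∀ ϖA : A, (ϖA : K × K) = ((ϖ' ^ 2 : K), (ϖ' ^ 2 : K)) →
    ∀ mA : Ideal A,
      mA = Ideal.span {a : A | ∃ c : K, Valued.v c < 1 ∧ (a : K × K) = (c, c)} →
      -- (1) A is not topologically finitely generated over k°
      (¬ ∃ s : Finset A, ∀ a : A, ∀ k : ℕ,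
        ∃ b ∈ Subring.closure
          ({x : A | ∃ c : K, Valued.v c ≤ 1 ∧ (x : K × K) = (c, c)} ∪ ↑s),
          a - b ∈ Ideal.span {ϖA ^ k}) ∧
      -- (2) A/𝔪A ≅ κ via the diagonal map k° → A
      ((∀ a : A, ∃ x : K, Valued.v x ≤ 1 ∧
          ∃ d : A, (d : K × K) = (x, x) ∧ a - d ∈ mA) ∧
        (∀ (x : K) (d : A), (d : K × K) = (x, x) → d ∈ mA → Valued.v x < 1)) ∧
      -- (3) the integral closure of A in K × K is k° × k°
      (∀ z : K × K,
        (∃ P : Polynomial A, P.Monic ∧ Polynomial.eval₂ A.subtype z P = 0) ↔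
          (Valued.v z.1 ≤ 1 ∧ Valued.v z.2 ≤ 1)) := by
  intro A hA ϖA hϖA mA hmA
  have memA : ∀ z : K × K, z ∈ A ↔ (Valued.v z.1 ≤ 1 ∧ Valued.v z.2 ≤ 1 ∧
      Valued.v (z.1 - z.2) < 1) := by
    intro z
    rw [← SetLike.mem_coe, hA]
    exact Iff.rfl
  have hdiag : ∀ x : K, Valued.v x ≤ 1 → ((x, x) : K × K) ∈ A := by
    intro x hx
    exact (memA _).mpr ⟨hx, hx, by simp⟩
  have vϖ'pos : 0 < Valued.v ϖ' := by
    rw [pos_iff_ne_zero, Valuation.ne_zero_iff]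
    exact hϖ'0
  have vr_pow : ∀ j, (Valued.v (r j)) ^ (p ^ j) = Valued.v ϖ' := by
    intro j
    induction j with
    | zero => simp [hr0]
    | succ n ih =>
      have hps : p ^ (n + 1) = p * p ^ n := by ring
      rw [hps, pow_mul, ← map_pow, hrp n, ih]
  have vr_lt1 : ∀ j, Valued.v (r j) < 1 := by
    intro j
    by_contra h
    push_neg at h
    have : (1 : NNReal) ≤ (Valued.v (r j)) ^ (p ^ j) := one_le_pow₀ h
    rw [vr_pow] at this
    exact absurd hϖ'1 (not_lt.mpr this)
  have vr_pos : ∀ j, 0 < Valued.v (r j) := by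
    intro j
    rw [pos_iff_ne_zero]
    intro h
    have := vr_pow j
    rw [h, zero_pow (pow_ne_zero j hp.pos.ne')] at this
    exact vϖ'pos.ne' this.symm
  have vϖ'_le_vr : ∀ j, Valued.v ϖ' ≤ Valued.v (r j) := by
    intro j
    rw [← vr_pow j]
    exact pow_le_of_le_one zero_le' (vr_lt1 j).le (pow_ne_zero j hp.pos.ne')
  refine ⟨?_, ⟨?_, ?_⟩, ?_⟩
  · -- part (1)
    rintro ⟨s, hs⟩
    set β : NNReal := s.sup (fun x => Valued.v ((x : K × K).1 - (x : K × K).2)) with hβ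
    have hβ1 : β < 1 := by
      apply Finset.sup_lt_iff (by norm_num : (⊥ : NNReal) < 1) |>.mpr
      intro x _
      exact ((memA _).mp x.2).2.2
    obtain ⟨n, hn⟩ := NNReal.exists_pow_lt_of_lt_one vϖ'pos hβ1
    -- β ≤ v (r n)
    have hβrn : β ≤ Valued.v (r n) := by
      have h1 : β ^ (p ^ n) ≤ β ^ n :=
        pow_le_pow_of_le_one zero_le' hβ1.le (Nat.lt_pow_self hp.one_lt : n < p ^ n).le
      have h2 : β ^ (p ^ n) ≤ (Valued.v (r n)) ^ (p ^ n) := by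
        rw [vr_pow]; exact h1.trans hn.le
      exact (pow_le_pow_iff_left₀ zero_le' zero_le' (pow_ne_zero n hp.pos.ne')).mp h2
    set m := n
    -- the test element
    have haA : ((r (m + 1), (0 : K)) : K × K) ∈ A := by
      refine (memA _).mpr ⟨(vr_lt1 (m + 1)).le, by simp, ?_⟩
      simpa using vr_lt1 (m + 1)
    obtain ⟨b, hb, hab⟩ := hs ⟨(r (m + 1), (0 : K)), haA⟩ 1
    -- closure bound
    let B : Subring A :=
      { carrier := {b : A | Valued.v ((b : K × K).1 - (b : K × K).2) ≤ Valued.v (r m)},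
        zero_mem' := by simp
        one_mem' := by simp
        add_mem' := by
          intro x y hx hy
          have hco : ((x + y : A) : K × K) = (x : K × K) + (y : K × K) := rfl
          show Valued.v (((x + y : A) : K × K).1 - ((x + y : A) : K × K).2) ≤ _
          rw [hco]
          have : ((x : K × K) + y).1 - ((x : K × K) + y).2
              = ((x : K × K).1 - (x : K × K).2) + ((y : K × K).1 - (y : K × K).2) := by
            simp; ring
          rw [this]
          exact (Valued.v.map_add _ _).trans (max_le hx hy)
        neg_mem' := by
          intro x hx
          have hco : ((-x : A) : K × K) = -(x : K × K) := rfl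
          show Valued.v (((-x : A) : K × K).1 - ((-x : A) : K × K).2) ≤ _
          rw [hco]
          have : (-(x : K × K)).1 - (-(x : K × K)).2
              = -((x : K × K).1 - (x : K × K).2) := by simp; ring
          rw [this, Valuation.map_neg]
          exact hx
        mul_mem' := by
          intro x y hx hy
          have hco : ((x * y : A) : K × K) = (x : K × K) * (y : K × K) := rfl
          show Valued.v (((x * y : A) : K × K).1 - ((x * y : A) : K × K).2) ≤ _
          rw [hco]
          have key : ((x : K × K) * y).1 - ((x : K × K) * y).2
              = (x : K × K).1 * ((y : K × K).1 - (y : K × K).2)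
                + (y : K × K).2 * ((x : K × K).1 - (x : K × K).2) := by
            simp; ring
          rw [key]
          refine (Valued.v.map_add _ _).trans (max_le ?_ ?_)
          · rw [map_mul]
            calc Valued.v (x : K × K).1 * Valued.v ((y : K × K).1 - (y : K × K).2)
                ≤ 1 * Valued.v (r m) :=
                  mul_le_mul' ((memA _).mp x.2).1 hy
              _ = Valued.v (r m) := one_mul _
          · rw [map_mul]
            calc Valued.v (y : K × K).2 * Valued.v ((x : K × K).1 - (x : K × K).2)
                ≤ 1 * Valued.v (r m) :=
                  mul_le_mul' ((memA _).mp y.2).2.1 hx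
              _ = Valued.v (r m) := one_mul _ }
    have hBle : Subring.closure
        ({x : A | ∃ c : K, Valued.v c ≤ 1 ∧ (x : K × K) = (c, c)} ∪ ↑s) ≤ B := by
      apply Subring.closure_le.mpr
      apply Set.union_subset
      · rintro x ⟨c, _, hcx⟩
        show Valued.v ((x : K × K).1 - (x : K × K).2) ≤ _
        rw [hcx]
        simp
      · intro x hx
        show Valued.v ((x : K × K).1 - (x : K × K).2) ≤ _
        exact le_trans (Finset.le_sup
          (f := fun x : A => Valued.v ((x : K × K).1 - (x : K × K).2)) hx) hβrn
    have hbB : Valued.v ((b : K × K).1 - (b : K × K).2) ≤ Valued.v (r m) := hBle hb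
    -- divisibility bound
    rw [pow_one, Ideal.mem_span_singleton] at hab
    obtain ⟨c, hc⟩ := hab
    have hcoe : ((⟨(r (m + 1), (0 : K)), haA⟩ - b : A) : K × K)
        = ((ϖ' ^ 2, ϖ' ^ 2) : K × K) * (c : K × K) := by
      rw [hc]
      push_cast
      rw [hϖA]
    have h1 : r (m + 1) - (b : K × K).1 = ϖ' ^ 2 * (c : K × K).1 := by
      have := congrArg Prod.fst hcoe
      simpa using this
    have h2 : (0 : K) - (b : K × K).2 = ϖ' ^ 2 * (c : K × K).2 := by
      have := congrArg Prod.snd hcoe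
      simpa using this
    -- strict inequalities
    have hsq : (Valued.v ϖ') ^ 2 < Valued.v ϖ' := by
      calc (Valued.v ϖ') ^ 2 = Valued.v ϖ' * Valued.v ϖ' := sq _
        _ < 1 * Valued.v ϖ' := mul_lt_mul_of_pos_right hϖ'1 vϖ'pos
        _ = Valued.v ϖ' := one_mul _
    have hsqlt : (Valued.v ϖ') ^ 2 < Valued.v (r (m + 1)) :=
      lt_of_lt_of_le hsq (vϖ'_le_vr (m + 1))
    have hrmlt : Valued.v (r m) < Valued.v (r (m + 1)) := by
      have he : Valued.v (r m) = (Valued.v (r (m + 1))) ^ p := by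
        rw [← hrp m, map_pow]
      rw [he]
      calc (Valued.v (r (m + 1))) ^ p ≤ (Valued.v (r (m + 1))) ^ 2 :=
          pow_le_pow_of_le_one zero_le' (vr_lt1 (m + 1)).le hp.two_le
        _ = Valued.v (r (m + 1)) * Valued.v (r (m + 1)) := sq _
        _ < 1 * Valued.v (r (m + 1)) :=
          mul_lt_mul_of_pos_right (vr_lt1 (m + 1)) (vr_pos (m + 1))
        _ = Valued.v (r (m + 1)) := one_mul _
    -- value bounds from divisibility
    have hv1 : Valued.v (r (m + 1) - (b : K × K).1) < Valued.v (r (m + 1)) := by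
      rw [h1, map_mul, map_pow]
      calc (Valued.v ϖ') ^ 2 * Valued.v (c : K × K).1
          ≤ (Valued.v ϖ') ^ 2 * 1 := mul_le_mul' le_rfl ((memA _).mp c.2).1
        _ = (Valued.v ϖ') ^ 2 := mul_one _
        _ < Valued.v (r (m + 1)) := hsqlt
    have hv2 : Valued.v ((b : K × K).2) < Valued.v (r (m + 1)) := by
      have : (b : K × K).2 = -(ϖ' ^ 2 * (c : K × K).2) := by
        rw [← h2]; ring
      rw [this, Valuation.map_neg, map_mul, map_pow]
      calc (Valued.v ϖ') ^ 2 * Valued.v (c : K × K).2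
          ≤ (Valued.v ϖ') ^ 2 * 1 := mul_le_mul' le_rfl ((memA _).mp c.2).2.1
        _ = (Valued.v ϖ') ^ 2 := mul_one _
        _ < Valued.v (r (m + 1)) := hsqlt
    have hv3 : Valued.v ((b : K × K).1 - (b : K × K).2) < Valued.v (r (m + 1)) :=
      lt_of_le_of_lt hbB hrmlt
    have hdecomp : r (m + 1) = (r (m + 1) - (b : K × K).1)
        + (((b : K × K).1 - (b : K × K).2) + (b : K × K).2) := by ring
    have : Valued.v (r (m + 1)) < Valued.v (r (m + 1)) := by
      nth_rewrite 1 [hdecomp]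
      exact Valued.v.map_add_lt hv1 (Valued.v.map_add_lt hv3 hv2)
    exact lt_irrefl _ this
  · -- part (2) surjectivity
    intro a
    refine ⟨(a : K × K).2, ((memA _).mp a.2).2.1,
      ⟨((a : K × K).2, (a : K × K).2), hdiag _ ((memA _).mp a.2).2.1⟩, rfl, ?_⟩
    obtain ⟨u, hu⟩ := IsAlgClosed.exists_pow_nat_eq
      ((a : K × K).1 - (a : K × K).2) (n := 2) two_pos
    have hvu : Valued.v u < 1 := by
      by_contra h
      push_neg at h
      have h2 : (1 : NNReal) ≤ (Valued.v u) ^ 2 := one_le_pow₀ h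
      rw [← map_pow, hu] at h2
      exact absurd ((memA _).mp a.2).2.2 (not_lt.mpr h2)
    have he1A : ((u, (0 : K)) : K × K) ∈ A :=
      (memA _).mpr ⟨hvu.le, by simp, by simpa using hvu⟩
    set e1 : A := ⟨(u, (0 : K)), he1A⟩
    set e2 : A := ⟨(u, u), hdiag u hvu.le⟩
    have he2 : e2 ∈ mA := by
      rw [hmA]
      exact Ideal.subset_span ⟨u, hvu, rfl⟩
    have hkey : a - ⟨((a : K × K).2, (a : K × K).2), hdiag _ ((memA _).mp a.2).2.1⟩
        = e1 * e2 := by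
      apply Subtype.ext
      push_cast
      apply Prod.ext
      · show (a : K × K).1 - (a : K × K).2 = u * u
        rw [← hu]; ring
      · show (a : K × K).2 - (a : K × K).2 = 0 * u
        ring
    rw [hkey]
    exact Ideal.mul_mem_left mA e1 he2
  · -- part (2) injectivity
    intro x d hdx hdm
    let I : Ideal A :=
      { carrier := {a : A | Valued.v ((a : K × K).1) < 1}
        zero_mem' := by simp
        add_mem' := by
          intro a b ha hb
          show Valued.v (((a + b : A) : K × K).1) < 1
          have : ((a + b : A) : K × K).1 = (a : K × K).1 + (b : K × K).1 := rfl
          rw [this]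
          exact Valued.v.map_add_lt ha hb
        smul_mem' := by
          intro c a ha
          simp only [Set.mem_setOf_eq, smul_eq_mul] at ha ⊢
          have hmu : ((c * a : A) : K × K).1 = (c : K × K).1 * (a : K × K).1 := rfl
          rw [hmu, map_mul]
          calc Valued.v (c : K × K).1 * Valued.v (a : K × K).1
              ≤ 1 * Valued.v (a : K × K).1 := mul_le_mul' ((memA _).mp c.2).1 le_rfl
            _ = Valued.v (a : K × K).1 := one_mul _
            _ < 1 := ha }
    have hle : mA ≤ I := by
      rw [hmA]
      apply Ideal.span_le.mpr
      rintro a ⟨c, hc, hac⟩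
      show Valued.v ((a : K × K).1) < 1
      rw [hac]
      exact hc
    have hvd : Valued.v ((d : K × K).1) < 1 := hle hdm
    rw [hdx] at hvd
    exact hvd
  · -- part (3)
    intro z
    constructor
    · rintro ⟨P, hPm, hPe⟩
      have hmk : ∀ a : A, (a : K × K).1 ∈ (Valued.v : Valuation K NNReal).integer :=
        fun a => ((memA _).mp a.2).1
      have hmk2 : ∀ a : A, (a : K × K).2 ∈ (Valued.v : Valuation K NNReal).integer :=
        fun a => ((memA _).mp a.2).2.1
      let g1 : A →+* (Valued.v : Valuation K NNReal).integer :=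
        { toFun := fun a => ⟨(a : K × K).1, hmk a⟩
          map_one' := rfl
          map_mul' := fun _ _ => rfl
          map_zero' := rfl
          map_add' := fun _ _ => rfl }
      let g2 : A →+* (Valued.v : Valuation K NNReal).integer :=
        { toFun := fun a => ⟨(a : K × K).2, hmk2 a⟩
          map_one' := rfl
          map_mul' := fun _ _ => rfl
          map_zero' := rfl
          map_add' := fun _ _ => rfl }
      constructor
      · have hint : IsIntegral ((Valued.v : Valuation K NNReal).integer) z.1 := by
          refine ⟨P.map g1, hPm.map g1, ?_⟩
          rw [Polynomial.eval₂_map]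
          have hcomp : (algebraMap ((Valued.v : Valuation K NNReal).integer) K).comp g1
              = (RingHom.fst K K).comp A.subtype := RingHom.ext fun a => rfl
          rw [hcomp]
          have := Polynomial.hom_eval₂ P A.subtype (RingHom.fst K K) z
          rw [hPe, map_zero] at this
          exact this.symm
        exact (Valuation.integer.integers (Valued.v : Valuation K NNReal)).mem_of_integral hint
      · have hint : IsIntegral ((Valued.v : Valuation K NNReal).integer) z.2 := by
          refine ⟨P.map g2, hPm.map g2, ?_⟩
          rw [Polynomial.eval₂_map]
          have hcomp : (algebraMap ((Valued.v : Valuation K NNReal).integer) K).comp g2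
              = (RingHom.snd K K).comp A.subtype := RingHom.ext fun a => rfl
          rw [hcomp]
          have := Polynomial.hom_eval₂ P A.subtype (RingHom.snd K K) z
          rw [hPe, map_zero] at this
          exact this.symm
        exact (Valuation.integer.integers (Valued.v : Valuation K NNReal)).mem_of_integral hint
    · rintro ⟨h1, h2⟩
      set d1 : A := ⟨(z.1, z.1), hdiag _ h1⟩
      set d2 : A := ⟨(z.2, z.2), hdiag _ h2⟩
      refine ⟨(Polynomial.X - Polynomial.C d1) * (Polynomial.X - Polynomial.C d2),
        (Polynomial.monic_X_sub_C d1).mul (Polynomial.monic_X_sub_C d2), ?_⟩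
      rw [Polynomial.eval₂_mul, Polynomial.eval₂_sub, Polynomial.eval₂_sub,
        Polynomial.eval₂_X, Polynomial.eval₂_C, Polynomial.eval₂_C]
      have hd1 : A.subtype d1 = ((z.1, z.1) : K × K) := rfl
      have hd2 : A.subtype d2 = ((z.2, z.2) : K × K) := rfl
      rw [hd1, hd2]
      apply Prod.ext <;> simp
end
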